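/- Let p, q be idempotents in a ring R with p − q Drazin invertible. Setting F := p(p−q)^D, G := (p−q)^D p, H := (p−q)^D(p−q), one has Fp = pG = pH = Hp. -/

import Mathlib

private lemma aux_pow_add {R : Type*} [Ring R] (y w : R) (hyw : y * w = 0)
    (hwy : w * y = 0) : ∀ k : ℕ, (y + w) ^ (k + 1) = y ^ (k + 1) + w ^ (k + 1) := by
  intro k
  induction k with
  | zero => simp
  | succ k ih =>
    have h2 : y ^ (k + 1) * w = 0 := by rw [pow_succ, mul_assoc, hyw, mul_zero]
    have h3 : w ^ (k + 1) * y = 0 := by rw [pow_succ, mul_assoc, hwy, mul_zero]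
    rw [pow_succ, ih, add_mul, mul_add, mul_add, h2, h3, ← pow_succ, ← pow_succ]
    abel

private lemma aux_idem_pow {R : Type*} [Ring R] (e : R) (he : e * e = e) :
    ∀ k : ℕ, e ^ (k + 1) = e := by
  intro k
  induction k with
  | zero => simp
  | succ k ih => rw [pow_succ, ih, he]

private lemma aux_absorb_right {R : Type*} [Ring R] (y e : R) (h : y * e = y) (k : ℕ) :
    y ^ (k + 1) * e = y ^ (k + 1) := by
  rw [pow_succ, mul_assoc, h]

private lemma aux_absorb_left {R : Type*} [Ring R] (y e : R) (h : e * y = y) (k : ℕ) :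
    e * y ^ (k + 1) = y ^ (k + 1) := by
  rw [pow_succ', ← mul_assoc, h]

/-- Double-commutant style lemma: if `x` commutes with `b`, `b*c = c*b`, `c*b*c = c`,
and `b - b*b*c` is nilpotent, then `x` commutes with `c`. -/
private lemma comm_drazin {R : Type*} [Ring R] (b c x : R)
    (hbc : b * c = c * b) (hcbc : c * b * c = c)
    (hnil : IsNilpotent (b - b * b * c)) (hx : x * b = b * x) :
    x * c = c * x := by
  obtain ⟨n, hw⟩ := hnil
  have hw' : (b - b * b * c) ^ (n + 1) = 0 := by
    rw [pow_succ', hw, mul_zero]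
  clear hw
  have hcb0 : c * b = b * c := hbc.symm
  have hcb' : ∀ t : R, c * (b * t) = b * (c * t) := fun t => by
    rw [← mul_assoc, hcb0, mul_assoc]
  have h1 : b * (c * c) = c := by rw [← mul_assoc, hbc, hcbc]
  have hee : (b * c) * (b * c) = b * c := by
    simp only [mul_assoc, hcb', h1]
  have hcw : c * (b - b * b * c) = 0 := by
    simp only [mul_sub, mul_assoc, hcb', hcb0, h1, sub_self]
  have hwc : (b - b * b * c) * c = 0 := by
    simp only [sub_mul, mul_assoc, h1, sub_self]
  have hyw : (b * b * c) * (b - b * b * c) = 0 := by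
    simp only [mul_sub, mul_assoc, hcb', hcb0, h1, sub_self]
  have hwy : (b - b * b * c) * (b * b * c) = 0 := by
    simp only [sub_mul, mul_sub, mul_assoc, hcb', hcb0, h1, sub_self]
  have hbm : b ^ (n + 1) = (b * b * c) ^ (n + 1) := by
    have hb : b = b * b * c + (b - b * b * c) := by abel
    calc b ^ (n + 1) = (b * b * c + (b - b * b * c)) ^ (n + 1) := by rw [← hb]
      _ = (b * b * c) ^ (n + 1) + (b - b * b * c) ^ (n + 1) :=
          aux_pow_add _ _ hyw hwy n
      _ = (b * b * c) ^ (n + 1) := by rw [hw', add_zero]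
  have hcomm : Commute b c := hbc
  have he1 : b * c = b ^ (n + 1) * c ^ (n + 1) := by
    rw [← hcomm.mul_pow, aux_idem_pow _ hee]
  have he2 : b * c = c ^ (n + 1) * b ^ (n + 1) := by
    have hee' : (c * b) * (c * b) = c * b := by rw [hcb0, hee]
    rw [← hcomm.symm.mul_pow, aux_idem_pow _ hee', hcb0]
  have hye : (b * b * c) * (b * c) = b * b * c := by
    simp only [mul_assoc, hcb', h1]
  have hey : (b * c) * (b * b * c) = b * b * c := by
    simp only [mul_assoc, hcb', h1]
  have hbme : b ^ (n + 1) * (b * c) = b ^ (n + 1) := by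
    rw [hbm]; exact aux_absorb_right _ _ hye n
  have hebm : (b * c) * b ^ (n + 1) = b ^ (n + 1) := by
    rw [hbm]; exact aux_absorb_left _ _ hey n
  have hxbm : x * b ^ (n + 1) = b ^ (n + 1) * x := (Commute.pow_right hx (n + 1))
  have hxe : x * (b * c) = (b * c) * x := by
    have A : x * (b * c) = b ^ (n + 1) * (x * c ^ (n + 1)) := by
      rw [he1, ← mul_assoc, hxbm, mul_assoc]
    have C : x * (b * c) = (b * c) * (x * (b * c)) := by
      calc x * (b * c) = b ^ (n + 1) * (x * c ^ (n + 1)) := A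
        _ = ((b * c) * b ^ (n + 1)) * (x * c ^ (n + 1)) := by rw [hebm]
        _ = (b * c) * (b ^ (n + 1) * (x * c ^ (n + 1))) :=
            mul_assoc (b * c) (b ^ (n + 1)) (x * c ^ (n + 1))
        _ = (b * c) * (x * (b * c)) := by rw [← A]
    have D : (b * c) * x = c ^ (n + 1) * (x * b ^ (n + 1)) := by
      rw [he2, mul_assoc, hxbm]
    have F : (b * c) * x = ((b * c) * x) * (b * c) := by
      calc (b * c) * x = c ^ (n + 1) * (x * b ^ (n + 1)) := D
        _ = c ^ (n + 1) * (x * (b ^ (n + 1) * (b * c))) := by rw [hbme]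
        _ = c ^ (n + 1) * ((x * b ^ (n + 1)) * (b * c)) := by
            rw [mul_assoc x (b ^ (n + 1)) (b * c)]
        _ = (c ^ (n + 1) * (x * b ^ (n + 1))) * (b * c) :=
            (mul_assoc (c ^ (n + 1)) (x * b ^ (n + 1)) (b * c)).symm
        _ = ((b * c) * x) * (b * c) := by rw [← D]
    rw [C, ← mul_assoc, ← F]
  have hec : (b * c) * c = c := by rw [mul_assoc, h1]
  have F1 : x * c = (b * c) * (x * c) := by
    calc x * c = x * ((b * c) * c) := by rw [hec]
      _ = (x * (b * c)) * c := (mul_assoc x (b * c) c).symm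
      _ = ((b * c) * x) * c := by rw [hxe]
      _ = (b * c) * (x * c) := mul_assoc (b * c) x c
  have F2 : c * x = (b * c) * (x * c) := by
    calc c * x = c * ((b * c) * x) := by rw [← mul_assoc, ← mul_assoc c b c, hcbc]
      _ = c * (x * (b * c)) := by rw [hxe]
      _ = c * (x * (((b * c) * b) * c)) := by rw [mul_assoc (b*c) b c, hee]
      _ = c * ((x * ((b * c) * b)) * c) := by rw [mul_assoc x ((b*c)*b) c]
      _ = c * ((((b * c) * b) * x) * c) := by
          have hxs : x * ((b * c) * b) = ((b * c) * b) * x := by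
            rw [← mul_assoc, hxe, mul_assoc, hx, ← mul_assoc]
          rw [hxs]
      _ = (c * ((b * c) * b)) * (x * c) := by
          rw [mul_assoc ((b*c)*b) x c, ← mul_assoc c ((b*c)*b) (x*c)]
      _ = (b * c) * (x * c) := by
          rw [← mul_assoc c (b*c) b, ← mul_assoc c b c, hcbc, hcb0]
  rw [F1, F2]

private lemma idem_comm_sq {R : Type*} [Ring R] (p q : R) (hp : p * p = p)
    (hq : q * q = q) : p * ((p - q) * (p - q)) = ((p - q) * (p - q)) * p := by
  have hp' : ∀ t : R, p * (p * t) = p * t := fun t => by rw [← mul_assoc, hp]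
  have hq' : ∀ t : R, q * (q * t) = q * t := fun t => by rw [← mul_assoc, hq]
  simp only [mul_sub, sub_mul, mul_assoc, hp', hq', hp, hq]
  abel

/-- `b` is the Drazin inverse of `a`. -/
def IsDrazinInverse {R : Type*} [Ring R] (a b : R) : Prop :=
  a * b = b * a ∧ b * a * b = b ∧ IsNilpotent (a - a * a * b)

theorem stmt4 {R : Type*} [Ring R] (p q d : R) (hp : p * p = p) (hq : q * q = q)
    (hd : IsDrazinInverse (p - q) d) :
    (p * d) * p = p * (d * p) ∧ p * (d * p) = p * (d * (p - q)) ∧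
      p * (d * (p - q)) = (d * (p - q)) * p := by
  obtain ⟨hda, hdad, hnil⟩ := hd
  set a := p - q with ha
  have had : d * a = a * d := hda.symm
  have had' : ∀ t : R, d * (a * t) = a * (d * t) := fun t => by
    rw [← mul_assoc, had, mul_assoc]
  have hdad' : ∀ t : R, d * (a * (d * t)) = d * t := fun t => by
    rw [← mul_assoc, ← mul_assoc, hdad]
  -- d = a * (d * d)
  have hd2 : a * (d * d) = d := by
    rw [← mul_assoc, hda, hdad]
  have hd2' : (d * d) * a = d := by
    rw [mul_assoc, had, ← mul_assoc, hdad]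
  have key : ∀ r : R, r * (a * a) = (a * a) * r → r * (d * d) = (d * d) * r := by
    intro r hcomm
    apply comm_drazin (a * a) (d * d) r _ _ _ hcomm
    · have h1 : Commute a d := hda
      exact ((h1.mul_left h1).mul_right (h1.mul_left h1))
    · have h0 : (d * d) * (a * a) = d * a := by
        rw [← mul_assoc, hd2']
      rw [h0, ← mul_assoc, hdad]
    · have hfac : (a - a * a * d) * (a + a * a * d) =
          a * a - (a * a) * (a * a) * (d * d) := by
        simp only [sub_mul, mul_add, mul_assoc, had', had]
        abel
      have c1 : Commute a (a * a * d) :=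
        ((Commute.refl a).mul_right (Commute.refl a)).mul_right hda
      have hcomm2 : Commute (a - a * a * d) (a + a * a * d) :=
        ((Commute.refl a).add_right c1).sub_left (c1.symm.add_right (Commute.refl _))
      rw [← hfac]
      exact hcomm2.isNilpotent_mul_right hnil
  have hpaa : p * (a * a) = (a * a) * p := by
    rw [ha]; exact idem_comm_sq p q hp hq
  have hqaa : q * (a * a) = (a * a) * q := by
    have hsq : (p - q) * (p - q) = (q - p) * (q - p) := by
      rw [← neg_sub q p, neg_mul_neg]
    rw [ha, hsq]
    exact idem_comm_sq q p hq hp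
  have hpd2 := key p hpaa
  have hqd2 := key q hqaa
  refine ⟨mul_assoc p d p, ?_, ?_⟩
  · have hpaq : p * (a * q) = 0 := by
      rw [ha, sub_mul, hq, mul_sub, ← mul_assoc, hp, sub_self]
    have hpdq : p * (d * q) = 0 := by
      calc p * (d * q) = p * ((a * (d * d)) * q) := by rw [hd2]
        _ = p * (a * ((d * d) * q)) := by rw [mul_assoc]
        _ = p * (a * (q * (d * d))) := by rw [hqd2]
        _ = (p * (a * q)) * (d * d) := by rw [← mul_assoc a q (d*d), ← mul_assoc]
        _ = 0 := by rw [hpaq, zero_mul]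
    have hsplit : d * a = d * p - d * q := by rw [ha, mul_sub]
    rw [hsplit, mul_sub, hpdq, sub_zero]
  · calc p * (d * a) = p * (a * d) := by rw [had]
      _ = p * (a * (a * (d * d))) := by rw [hd2]
      _ = (p * (a * a)) * (d * d) := by rw [← mul_assoc a a (d*d), ← mul_assoc]
      _ = ((a * a) * p) * (d * d) := by rw [hpaa]
      _ = (a * a) * (p * (d * d)) := mul_assoc (a * a) p (d * d)
      _ = (a * a) * ((d * d) * p) := by rw [hpd2]
      _ = ((a * a) * (d * d)) * p := (mul_assoc (a * a) (d * d) p).symm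
      _ = (a * (a * (d * d))) * p := by rw [mul_assoc a a (d * d)]
      _ = (a * d) * p := by rw [hd2]
      _ = (d * a) * p := by rw [had]
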